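/- arXiv:1810.00344 — 3 statements merged into one kernel-verified Lean document; each statement's English description precedes it below -/
import Mathlib

section
/- Let G be a totally ordered abelian group. For g, h ≥ 0 in G write g ≪ h if N·g < h for every natural number N. If 0 < g₁ ≪ g₂ ≪ g₃ ≪ ⋯ is a sequence in G, then the elements g₁, g₂, g₃, … are linearly independent over ℤ (no nontrivial finite integer combination vanishes). -/
/-- In a linearly ordered abelian group, if `0 < g 0` and each `g i ≪ g (i+1)`
(meaning `n • g i < g (i+1)` for all naturals `n`), then the `g i` are
linearly independent over `ℤ`. -/
theorem stmt_0 {G : Type*} [AddCommGroup G] [LinearOrder G] [IsOrderedAddMonoid G] (g : ℕ → G)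
    (h0 : 0 < g 0) (hll : ∀ i, ∀ n : ℕ, n • g i < g (i + 1)) :
    LinearIndependent ℤ g := by
  have hpos : ∀ m, 0 < g m := by
    intro m
    induction m with
    | zero => exact h0
    | succ n ih =>
      have := hll n 1
      rw [one_nsmul] at this
      exact ih.trans this
  have key : ∀ (c : ℕ → ℤ) (m : ℕ), |∑ i ∈ Finset.range m, c i • g i| < g m := by
    intro c m
    induction m with
    | zero => simpa using hpos 0
    | succ n ih =>
      rw [Finset.sum_range_succ]
      calc |∑ i ∈ Finset.range n, c i • g i + c n • g n|
          ≤ |∑ i ∈ Finset.range n, c i • g i| + |c n • g n| := abs_add_le _ _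
        _ < g n + |c n • g n| := by gcongr
        _ = g n + (c n).natAbs • g n := by
            rw [abs_zsmul, abs_of_pos (hpos n), Int.abs_eq_natAbs, natCast_zsmul]
        _ = ((c n).natAbs + 1) • g n := by rw [succ_nsmul, add_comm]
        _ < g (n + 1) := hll n _
  rw [linearIndependent_iff]
  intro l hl
  by_contra hne
  have hsupp : l.support.Nonempty := Finsupp.support_nonempty_iff.mpr hne
  set m := l.support.max' hsupp with hm
  have hsub : l.support ⊆ Finset.range (m + 1) := by
    intro i hi
    simp only [Finset.mem_range, Nat.lt_succ_iff]
    exact Finset.le_max' _ _ hi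
  have htot : ∑ i ∈ Finset.range (m + 1), l i • g i = 0 := by
    rw [← Finset.sum_subset hsub (fun i _ hi => by
      simp [Finsupp.notMem_support_iff.mp hi])]
    rw [Finsupp.linearCombination_apply, Finsupp.sum] at hl
    exact hl
  rw [Finset.sum_range_succ] at htot
  have h1 : l m • g m = -∑ i ∈ Finset.range m, l i • g i := by
    exact eq_neg_of_add_eq_zero_right htot
  have h2 : |l m • g m| < g m := by
    rw [h1, abs_neg]; exact key l m
  have hlm : l m ≠ 0 := Finsupp.mem_support_iff.mp (l.support.max'_mem hsupp)
  have h3 : g m ≤ |l m • g m| := by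
    rw [abs_zsmul, abs_of_pos (hpos m)]
    calc g m = (1 : ℤ) • g m := (one_zsmul _).symm
      _ ≤ |l m| • g m := zsmul_le_zsmul_left (hpos m).le (Int.one_le_abs hlm)
  exact absurd h2 (not_lt.mpr h3)
end

section
/- Let G be a linearly ordered abelian group. Suppose (gᵢ)ᵢ∈ℕ is a sequence in G and (uᵢ)ᵢ∈ℕ, (vᵢ)ᵢ∈ℕ are sequences of positive elements such that gᵢ ≫ uᵢ, gᵢ is dominated by vᵢ, and vᵢ ≪ uᵢ₊₁ for all i. Then the gᵢ are linearly independent over ℤ. -/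
private lemma small_add' {G : Type*} [AddCommGroup G] [LinearOrder G] [IsOrderedAddMonoid G] {a b c : G}
    (ha : ∀ n : ℕ, n • a < c) (hb : ∀ n : ℕ, n • b < c) : ∀ n : ℕ, n • (a + b) < c := by
  intro n
  rcases le_total a b with h | h
  · calc n • (a + b) = n • a + n • b := smul_add n a b
    _ ≤ n • b + n • b := by gcongr
    _ = (n + n) • b := (add_nsmul b n n).symm
    _ < c := hb _
  · calc n • (a + b) = n • a + n • b := smul_add n a b
    _ ≤ n • a + n • a := by gcongr
    _ = (n + n) • a := (add_nsmul a n n).symm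
    _ < c := ha _

/-- If sequences `u i`, `v i` of positive elements satisfy `u i ≪ g i`,
`|g i| ≪ v i`, and `v i ≪ u (i+1)`, then the `g i` are linearly
independent over `ℤ`. -/
theorem stmt_3 {G : Type*} [AddCommGroup G] [LinearOrder G] [IsOrderedAddMonoid G]
    (g u v : ℕ → G) (hu : ∀ i, 0 < u i) (hv : ∀ i, 0 < v i)
    (hgu : ∀ i, ∀ n : ℕ, n • u i < g i)
    (hgv : ∀ i, ∀ n : ℕ, n • |g i| < v i)
    (hvu : ∀ i, ∀ n : ℕ, n • v i < u (i + 1)) :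
    LinearIndependent ℤ g := by
  -- Claim A: for i < k, |g i| ≪ u k
  have A : ∀ k i, i < k → ∀ n : ℕ, n • |g i| < u k := by
    intro k
    induction k with
    | zero => intro i h; exact absurd h (Nat.not_lt_zero i)
    | succ k ih =>
      intro i h n
      rcases Nat.lt_succ_iff_lt_or_eq.mp h with h' | rfl
      · calc n • |g i| < u k := ih i h' n
        _ < g k := by simpa using hgu k 1
        _ ≤ |g k| := le_abs_self _
        _ < v k := by simpa using hgv k 1
        _ < u (k + 1) := by simpa using hvu k 1
      · calc n • |g i| < v i := hgv i n
        _ < u (i + 1) := by simpa using hvu i 1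
  -- Claim B: sums with indices < k are ≪ u k
  have B : ∀ (k : ℕ) (s : Finset ℕ) (c : ℕ → ℤ), (∀ i ∈ s, i < k) →
      ∀ n : ℕ, n • |∑ i ∈ s, c i • g i| < u k := by
    intro k s
    induction s using Finset.induction with
    | empty => intro c _ n; simpa using hu k
    | @insert a s ha ih =>
      intro c hs n
      have h1 : ∀ m : ℕ, m • |c a • g a| < u k := by
        intro m
        have : |c a • g a| = (c a).natAbs • |g a| := by
          rw [abs_zsmul, ← natCast_zsmul, Int.natCast_natAbs]
        rw [this, smul_smul]
        exact A k a (hs a (Finset.mem_insert_self a s)) _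
      have h2 : ∀ m : ℕ, m • |∑ i ∈ s, c i • g i| < u k :=
        ih c (fun i hi => hs i (Finset.mem_insert_of_mem hi))
      have habs : |∑ i ∈ insert a s, c i • g i| ≤ |c a • g a| + |∑ i ∈ s, c i • g i| := by
        rw [Finset.sum_insert ha]; exact abs_add_le _ _
      calc n • |∑ i ∈ insert a s, c i • g i|
          ≤ n • (|c a • g a| + |∑ i ∈ s, c i • g i|) := by gcongr
        _ < u k := small_add' h1 h2 n
  rw [linearIndependent_iff']
  intro s c hsum i hi
  by_contra hc
  set s' : Finset ℕ := s.filter (fun j => c j ≠ 0) with hs'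
  have hne : s'.Nonempty := ⟨i, Finset.mem_filter.mpr ⟨hi, hc⟩⟩
  set k := s'.max' hne with hk
  have hks' : k ∈ s' := s'.max'_mem hne
  have hck : c k ≠ 0 := (Finset.mem_filter.mp hks').2
  have hsum' : ∑ j ∈ s', c j • g j = 0 := by
    rw [← hsum]
    apply Finset.sum_subset (Finset.filter_subset _ _)
    intro j hj hj'
    have : c j = 0 := by
      by_contra h
      exact hj' (Finset.mem_filter.mpr ⟨hj, h⟩)
    simp [this]
  have hsplit : c k • g k + ∑ j ∈ s'.erase k, c j • g j = 0 := by
    rwa [Finset.add_sum_erase _ (fun j => c j • g j) hks']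
  set r := ∑ j ∈ s'.erase k, c j • g j with hr
  have heq : |c k • g k| = |r| := by
    rw [eq_neg_of_add_eq_zero_left hsplit, abs_neg]
  have hrlt : |r| < u k := by
    have := B k (s'.erase k) c (fun j hj =>
      lt_of_le_of_ne (s'.le_max' j (Finset.mem_of_mem_erase hj)) (Finset.ne_of_mem_erase hj)) 1
    simpa using this
  have hle : |g k| ≤ |c k • g k| := by
    rw [abs_zsmul]
    calc |g k| = (1 : ℤ) • |g k| := (one_zsmul _).symm
    _ ≤ |c k| • |g k| := by
        apply smul_le_smul_of_nonneg_right _ (abs_nonneg _)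
        exact Int.one_le_abs hck
    _ = |c k| • |g k| := rfl
  have huk : u k < |g k| := lt_of_lt_of_le (by simpa using hgu k 1) (le_abs_self _)
  exact lt_irrefl (|r|) (hrlt.trans (huk.trans_le (hle.trans heq.le)))
end

section
/- Let p, q be coprime positive integers with 2 ≤ p < q, and S = ⟨p, q⟩ the numerical semigroup they generate. Then (1 - t) · Σ_{s ∈ S, s ≤ (p-1)(q-1)} t^s + t^{(p-1)(q-1)+1} · (1-t) · (1 + t + t² + ⋯ continued formally) equals the Alexander polynomial of the (p,q) torus knot; equivalently, as polynomials: (1 - t) · Σ_{s ∈ S, s < (p-1)(q-1)} t^s + t^{(p-1)(q-1)} = (t^{pq} - 1)(t - 1) / ((t^p - 1)(t^q - 1)). -/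
open Polynomial
open scoped Classical

/-- The semigroup identity for the Alexander polynomial of the torus knot
`T_{p,q}`: as polynomials over `ℤ`,
`((1 - t) · Σ_{s ∈ S, s < (p-1)(q-1)} t^s + t^{(p-1)(q-1)}) · (t^p - 1)(t^q - 1)
 = (t^{pq} - 1)(t - 1)`. -/
theorem stmt_7 (p q : ℕ) (hp : 2 ≤ p) (hpq : p < q) (hco : Nat.Coprime p q) :
    ((1 - X) * (∑ s ∈ Finset.range ((p - 1) * (q - 1)),
        if s ∈ AddSubmonoid.closure ({p, q} : Set ℕ) then X ^ s else 0) +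
      X ^ ((p - 1) * (q - 1))) * ((X ^ p - 1) * (X ^ q - 1)) =
    (X ^ (p * q) - 1) * (X - (1 : Polynomial ℤ)) := by
  have hq : 2 ≤ q := by omega
  have hp0 : 0 < p := by omega
  have hq0 : 0 < q := by omega
  set cl := AddSubmonoid.closure ({p, q} : Set ℕ) with hcl
  have mem_iff : ∀ n : ℕ, n ∈ cl ↔ ∃ a b : ℕ, a * p + b * q = n := by
    intro n
    rw [hcl, AddSubmonoid.mem_closure_pair]
    simp [smul_eq_mul]
  -- uniqueness of the representation of multiples of p
  have uniq : ∀ x a b : ℕ, x < q → p * x = a * p + b * q → b = 0 := by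
    intro x a b hx h
    have h1 : p * a ≤ p * x := by rw [h, mul_comm p a]; omega
    have ha : a ≤ x := Nat.le_of_mul_le_mul_left h1 hp0
    have h2 : p * (x - a) = b * q := by
      zify [ha] at h ⊢
      linear_combination h
    have hdvd : q ∣ p * (x - a) := ⟨b, h2.trans (mul_comm b q)⟩
    have hdvd2 : q ∣ (x - a) := Nat.Coprime.dvd_of_dvd_mul_left hco.symm hdvd
    have hxa : x - a = 0 := Nat.eq_zero_of_dvd_of_lt hdvd2 (by omega)
    rw [hxa, mul_zero] at h2
    rcases Nat.mul_eq_zero.mp h2.symm with h | h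
    · exact h
    · omega
  -- every n ≥ (p-1)(q-1) is in the semigroup (Chicken McNugget)
  have frob : ∀ n : ℕ, (p - 1) * (q - 1) ≤ n → n ∈ cl := by
    intro n hn
    by_contra hmem
    have hub : n ≤ p * q - p - q :=
      (frobeniusNumber_pair hco (by omega) (by omega)).2 hmem
    obtain ⟨a, rfl⟩ : ∃ a, p = a + 2 := ⟨p - 2, by omega⟩
    obtain ⟨b, rfl⟩ : ∃ b, q = b + 2 := ⟨q - 2, by omega⟩
    have h1 : (a + 2) * (b + 2) = a * b + 2 * a + 2 * b + 4 := by ring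
    have h2 : (a + 2 - 1) * (b + 2 - 1) = a * b + a + b + 1 := by
      have e1 : a + 2 - 1 = a + 1 := by omega
      have e2 : b + 2 - 1 = b + 1 := by omega
      rw [e1, e2]; ring
    rw [h1] at hub
    rw [h2] at hn
    generalize a * b = m at hub hn
    omega
  have stepq : ∀ s, s ∈ cl → s + q ∈ cl := fun s hs =>
    AddSubmonoid.add_mem _ hs (AddSubmonoid.subset_closure (by simp))
  set c := (p - 1) * (q - 1) with hc
  set F : Polynomial ℤ := ∑ s ∈ Finset.range c, if s ∈ cl then X ^ s else 0 with hFdef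
  set P : Polynomial ℤ := ∑ x ∈ Finset.range q, (X : Polynomial ℤ) ^ (p * x) with hPdef
  set Sser : PowerSeries ℤ := PowerSeries.mk (fun n => if n ∈ cl then 1 else 0) with hSdef
  set G : PowerSeries ℤ := PowerSeries.mk (fun _ => (1 : ℤ)) with hGdef
  -- geometric series
  have hgeom : ((1 : PowerSeries ℤ) - PowerSeries.X) * G = 1 := by
    ext n
    rw [sub_mul, one_mul, map_sub]
    rw [← pow_one (PowerSeries.X (R := ℤ)), PowerSeries.coeff_X_pow_mul']
    simp only [hGdef, PowerSeries.coeff_mk, PowerSeries.coeff_one]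
    split_ifs <;> omega
  -- coefficients of F
  have hF : ∀ n : ℕ, F.coeff n = if n < c ∧ n ∈ cl then 1 else 0 := by
    intro n
    rw [hFdef, Polynomial.finset_sum_coeff]
    have hterm : ∀ s, (if s ∈ cl then (X : Polynomial ℤ) ^ s else 0).coeff n
        = if s = n then (if n ∈ cl then (1 : ℤ) else 0) else 0 := by
      intro s
      by_cases h : s = n
      · subst h
        by_cases hs : s ∈ cl <;> simp [hs]
      · by_cases hs : s ∈ cl <;>
          simp [hs, h, Polynomial.coeff_X_pow, Ne.symm h]
    rw [Finset.sum_congr rfl fun s _ => hterm s, Finset.sum_ite_eq' (Finset.range c) n]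
    by_cases h1 : n < c
    · simp [h1]
    · simp [h1, Finset.mem_range]
  -- decomposition of the semigroup series
  have Sdecomp : Sser = (F : PowerSeries ℤ) + PowerSeries.X ^ c * G := by
    ext n
    rw [map_add, PowerSeries.coeff_X_pow_mul']
    rw [hSdef, PowerSeries.coeff_mk, Polynomial.coeff_coe, hF]
    simp only [hGdef, PowerSeries.coeff_mk]
    by_cases h1 : c ≤ n
    · have h2 : n ∈ cl := frob n h1
      rw [if_pos h2, if_neg (by omega), if_pos h1]
      ring
    · rw [if_neg h1, add_zero]
      by_cases h2 : n ∈ cl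
      · rw [if_pos h2, if_pos ⟨by omega, h2⟩]
      · rw [if_neg h2, if_neg (by tauto)]
  have hA : ((1 : PowerSeries ℤ) - PowerSeries.X) * Sser
      = (1 - PowerSeries.X) * (F : PowerSeries ℤ) + PowerSeries.X ^ c := by
    rw [Sdecomp]
    calc (1 - PowerSeries.X) * ((F : PowerSeries ℤ) + PowerSeries.X ^ c * G)
        = (1 - PowerSeries.X) * (F : PowerSeries ℤ)
          + PowerSeries.X ^ c * ((1 - PowerSeries.X) * G) := by ring
      _ = _ := by rw [hgeom, mul_one]
  -- coefficients of P
  have hP : ∀ n : ℕ, P.coeff n = if ∃ x, x < q ∧ n = p * x then 1 else 0 := by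
    intro n
    rw [hPdef, Polynomial.finset_sum_coeff]
    simp only [Polynomial.coeff_X_pow]
    split_ifs with h
    · obtain ⟨x, hx, rfl⟩ := h
      rw [Finset.sum_eq_single x]
      · simp
      · intro b _ hbx
        rw [if_neg]
        intro he
        exact hbx (Nat.eq_of_mul_eq_mul_left hp0 he.symm)
      · intro hx'
        exact absurd (Finset.mem_range.mpr hx) hx'
    · exact Finset.sum_eq_zero fun b hb =>
        if_neg fun he => h ⟨b, Finset.mem_range.mp hb, he⟩
  -- the key combinatorial identity
  have key : ∀ n : ℕ,
      ((if n ∈ cl then (1 : ℤ) else 0)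
        - if q ≤ n then (if n - q ∈ cl then (1 : ℤ) else 0) else 0)
      = if ∃ x, x < q ∧ n = p * x then 1 else 0 := by
    intro n
    by_cases h1 : ∃ x, x < q ∧ n = p * x
    · obtain ⟨x, hx, rfl⟩ := h1
      have hmem : p * x ∈ cl := (mem_iff _).2 ⟨x, 0, by ring⟩
      have hnot : ¬(q ≤ p * x ∧ p * x - q ∈ cl) := by
        rintro ⟨hle, hmem'⟩
        obtain ⟨a, b, hab⟩ := (mem_iff _).1 hmem'
        have hq1 : (b + 1) * q = b * q + q := by ring
        have : p * x = a * p + (b + 1) * q := by omega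
        exact absurd (uniq x a (b + 1) hx this) (by omega)
      rw [if_pos hmem]
      rw [if_pos (⟨x, hx, rfl⟩ : ∃ y, y < q ∧ p * x = p * y)]
      by_cases hle : q ≤ p * x
      · rw [if_pos hle, if_neg fun hm => hnot ⟨hle, hm⟩]
        ring
      · rw [if_neg hle]
        ring
    · rw [if_neg h1]
      by_cases h2 : n ∈ cl
      · obtain ⟨a, b, hab⟩ := (mem_iff n).1 h2
        have hkey : q ≤ n ∧ n - q ∈ cl := by
          rcases Nat.eq_zero_or_pos b with rfl | hb
          · rw [zero_mul, add_zero] at hab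
            have hn : n = p * a := by rw [← hab, mul_comm]
            have haq : q ≤ a := by
              by_contra hlt
              exact h1 ⟨a, by omega, hn⟩
            have hqn : q ≤ n :=
              le_trans haq (le_trans (Nat.le_mul_of_pos_right a hp0) hab.le)
            refine ⟨hqn, (mem_iff _).2 ⟨a - q, p - 1, ?_⟩⟩
            zify [haq, hqn, (by omega : 1 ≤ p)]
            zify at hab
            linear_combination hab
          · have hbq : q ≤ b * q := Nat.le_mul_of_pos_left q hb
            have hqn : q ≤ n := by omega
            refine ⟨hqn, (mem_iff _).2 ⟨a, b - 1, ?_⟩⟩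
            zify [hb, hqn]
            zify at hab
            linear_combination hab
        rw [if_pos h2, if_pos hkey.1, if_pos hkey.2]
        ring
      · rw [if_neg h2]
        have : (if q ≤ n then (if n - q ∈ cl then (1 : ℤ) else 0) else 0) = 0 := by
          by_cases hle : q ≤ n
          · rw [if_pos hle, if_neg]
            intro hm
            exact h2 (by simpa [Nat.sub_add_cancel hle] using stepq _ hm)
          · rw [if_neg hle]
        rw [this]
        ring
  -- the series identity (1 - X^q) * S = P
  have hB : ((1 : PowerSeries ℤ) - PowerSeries.X ^ q) * Sser = (P : PowerSeries ℤ) := by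
    ext n
    rw [sub_mul, one_mul, map_sub, PowerSeries.coeff_X_pow_mul']
    rw [hSdef, PowerSeries.coeff_mk, Polynomial.coeff_coe, hP]
    by_cases hle : q ≤ n
    · rw [if_pos hle, PowerSeries.coeff_mk]
      have := key n
      rw [if_pos hle] at this
      exact this
    · rw [if_neg hle]
      have := key n
      rw [if_neg hle] at this
      exact this
  -- geometric sum identity for P
  have hC : P * (X ^ p - 1) = X ^ (p * q) - (1 : Polynomial ℤ) := by
    have h := geom_sum_mul ((X : Polynomial ℤ) ^ p) q
    have hP' : P = ∑ i ∈ Finset.range q, ((X : Polynomial ℤ) ^ p) ^ i := by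
      rw [hPdef]
      exact Finset.sum_congr rfl fun i _ => pow_mul X p i
    rw [hP', h, ← pow_mul]
  -- assemble everything
  rw [← Polynomial.coe_inj]
  simp only [Polynomial.coe_mul, Polynomial.coe_add, Polynomial.coe_sub,
    Polynomial.coe_pow, Polynomial.coe_one, Polynomial.coe_X]
  have hC' : (P : PowerSeries ℤ) * (PowerSeries.X ^ p - 1)
      = PowerSeries.X ^ (p * q) - 1 := by
    have h2 := congrArg (fun r : Polynomial ℤ => (r : PowerSeries ℤ)) hC
    simp only [Polynomial.coe_mul, Polynomial.coe_sub, Polynomial.coe_pow,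
      Polynomial.coe_X, Polynomial.coe_one] at h2
    exact h2
  rw [← hA]
  linear_combination (-(1 - PowerSeries.X (R := ℤ)) * (PowerSeries.X ^ p - 1)) * hB
    + (-(1 - PowerSeries.X (R := ℤ))) * hC'
end
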